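/- Let Ā ∈ ℝ^{N×N}, B̄ ∈ ℝ^{N×M} with (Ā, B̄) controllable, let Q̄ ∈ ℝ^{N×N} be symmetric positive semidefinite, let P be a real symmetric positive semidefinite solution of the algebraic Riccati equation ĀᵀP + PĀ − PB̄B̄ᵀP + Q̄ = 0, and set Ã = Ā − B̄B̄ᵀP. If h ∈ ℝ^N satisfies Ãh = 0, then Ph = 0. -/

import Mathlib

open Matrix

/-- A pair `(M, N)` with `M : k×k`, `N : k×l` is controllable if the controllability
matrix `[N, MN, …, M^{k−1}N]` has full rank `k`. -/
def Controllable {K L : Type*} [Fintype K] [Fintype L] [DecidableEq K]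
    (M : Matrix K K ℝ) (N : Matrix K L ℝ) : Prop :=
  (Matrix.of fun (i : K) (p : Fin (Fintype.card K) × L) => (M ^ (p.1 : ℕ) * N) i p.2).rank
    = Fintype.card K

/-- Swap a matrix across a dot product. -/
lemma dp_swap {m n : Type*} [Fintype m] [Fintype n] (X : Matrix m n ℝ) (a : n → ℝ) (b : m → ℝ) :
    (X *ᵥ a) ⬝ᵥ b = a ⬝ᵥ (Xᵀ *ᵥ b) := by
  rw [dotProduct_comm, dotProduct_mulVec, mulVec_transpose, dotProduct_comm]

/-- If `(Ā, B̄)` is controllable, `Q̄` is symmetric PSD, `P` is a symmetric PSD solution of the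
algebraic Riccati equation, and `Ã = Ā − B̄B̄ᵀP`, then every `h` with `Ãh = 0` satisfies
`Ph = 0`. -/
theorem riccati_kernel_of_closedLoop {N M : ℕ}
    (Abar : Matrix (Fin N) (Fin N) ℝ) (Bbar : Matrix (Fin N) (Fin M) ℝ)
    (Qbar : Matrix (Fin N) (Fin N) ℝ) (hQ : Qbar.PosSemidef)
    (hc : Controllable Abar Bbar)
    (P : Matrix (Fin N) (Fin N) ℝ) (hP : P.PosSemidef)
    (hare : Abarᵀ * P + P * Abar - P * Bbar * Bbarᵀ * P + Qbar = 0)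
    (h : Fin N → ℝ) (hker : (Abar - Bbar * Bbarᵀ * P) *ᵥ h = 0) :
    P *ᵥ h = 0 := by
  have hPs : Pᵀ = P := by exact (by simpa using hP.1 : P.IsSymm)
  -- kernel condition: Abar h = B Bᵀ P h
  have hAh : Abar *ᵥ h = Bbar *ᵥ (Bbarᵀ *ᵥ (P *ᵥ h)) := by
    rw [sub_mulVec, sub_eq_zero] at hker
    rw [hker, ← mulVec_mulVec, ← mulVec_mulVec]
  -- three quadratic-form identities
  have e1 : h ⬝ᵥ (Abarᵀ *ᵥ (P *ᵥ h))
      = (Bbarᵀ *ᵥ (P *ᵥ h)) ⬝ᵥ (Bbarᵀ *ᵥ (P *ᵥ h)) := by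
    rw [← dp_swap Abar h (P *ᵥ h), hAh, dp_swap Bbar]
  have e2 : h ⬝ᵥ (P *ᵥ (Abar *ᵥ h))
      = (Bbarᵀ *ᵥ (P *ᵥ h)) ⬝ᵥ (Bbarᵀ *ᵥ (P *ᵥ h)) := by
    rw [hAh, dotProduct_comm, dp_swap P, hPs, dp_swap Bbar]
  have e3 : h ⬝ᵥ (P *ᵥ (Bbar *ᵥ (Bbarᵀ *ᵥ (P *ᵥ h))))
      = (Bbarᵀ *ᵥ (P *ᵥ h)) ⬝ᵥ (Bbarᵀ *ᵥ (P *ᵥ h)) := by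
    rw [dotProduct_comm, dp_swap P, hPs, dp_swap Bbar]
  -- the quadratic form of the ARE at h
  have h0 : h ⬝ᵥ ((Abarᵀ * P + P * Abar - P * Bbar * Bbarᵀ * P + Qbar) *ᵥ h) = 0 := by
    rw [hare, zero_mulVec, dotProduct_zero]
  simp only [add_mulVec, sub_mulVec, ← mulVec_mulVec, dotProduct_add, dotProduct_sub] at h0
  rw [e1, e2, e3] at h0
  have hq : (Bbarᵀ *ᵥ (P *ᵥ h)) ⬝ᵥ (Bbarᵀ *ᵥ (P *ᵥ h)) + h ⬝ᵥ (Qbar *ᵥ h) = 0 := by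
    linarith
  have hvv : (0:ℝ) ≤ (Bbarᵀ *ᵥ (P *ᵥ h)) ⬝ᵥ (Bbarᵀ *ᵥ (P *ᵥ h)) := by
    simpa [dotProduct] using
      Finset.sum_nonneg fun i _ => mul_self_nonneg ((Bbarᵀ *ᵥ (P *ᵥ h)) i)
  have hQh : (0:ℝ) ≤ h ⬝ᵥ (Qbar *ᵥ h) := by simpa using hQ.dotProduct_mulVec_nonneg h
  have hv0 : Bbarᵀ *ᵥ (P *ᵥ h) = 0 :=
    dotProduct_self_eq_zero.mp (le_antisymm (by linarith) hvv)
  have hQh0 : Qbar *ᵥ h = 0 :=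
    (hQ.dotProduct_mulVec_zero_iff h).mp (by simpa using (by linarith : h ⬝ᵥ (Qbar *ᵥ h) = 0))
  have hA0 : Abar *ᵥ h = 0 := by rw [hAh, hv0, mulVec_zero]
  -- Abarᵀ (P h) = 0 from the ARE applied to h
  have hAtu : Abarᵀ *ᵥ (P *ᵥ h) = 0 := by
    have h0' : (Abarᵀ * P + P * Abar - P * Bbar * Bbarᵀ * P + Qbar) *ᵥ h = 0 := by
      rw [hare, zero_mulVec]
    simp only [add_mulVec, sub_mulVec, ← mulVec_mulVec] at h0'
    simpa [hA0, hv0, hQh0] using h0'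
  -- all powers
  have hpow : ∀ n : ℕ, Bbarᵀ *ᵥ ((Abarᵀ)^n *ᵥ (P *ᵥ h)) = 0 := by
    intro n
    cases n with
    | zero => simpa using hv0
    | succ k =>
      rw [show (Abarᵀ)^(k+1) *ᵥ (P *ᵥ h) = (Abarᵀ)^k *ᵥ (Abarᵀ *ᵥ (P *ᵥ h)) by
        rw [mulVec_mulVec (P *ᵥ h) ((Abarᵀ)^k) Abarᵀ, ← pow_succ], hAtu, mulVec_zero, mulVec_zero]
  have key : ∀ k : ℕ, (Abar ^ k * Bbar)ᵀ *ᵥ (P *ᵥ h) = 0 := by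
    intro k
    rw [transpose_mul, transpose_pow, ← mulVec_mulVec]
    exact hpow k
  -- the controllability matrix
  set C : Matrix (Fin N) (Fin (Fintype.card (Fin N)) × Fin M) ℝ :=
    Matrix.of fun i p => (Abar ^ (p.1 : ℕ) * Bbar) i p.2 with hC
  have hrank : C.rank = Fintype.card (Fin N) := hc
  have hCtu : Cᵀ *ᵥ (P *ᵥ h) = 0 := by
    funext p
    have := congrFun (key p.1) p.2
    simpa [hC, Matrix.mulVec, dotProduct, Matrix.transpose_apply] using this
  have hsurj : Function.Surjective C.mulVecLin := by
    rw [← LinearMap.range_eq_top]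
    apply Submodule.eq_top_of_finrank_eq
    rw [show Module.finrank ℝ (LinearMap.range C.mulVecLin) = C.rank from rfl, hrank]
    simp
  obtain ⟨x, hx⟩ := hsurj (P *ᵥ h)
  have hx' : C *ᵥ x = P *ᵥ h := by simpa [mulVecLin_apply] using hx
  have hfin : (P *ᵥ h) ⬝ᵥ (P *ᵥ h) = 0 := by
    calc (P *ᵥ h) ⬝ᵥ (P *ᵥ h) = (C *ᵥ x) ⬝ᵥ (P *ᵥ h) := by rw [hx']
      _ = x ⬝ᵥ (Cᵀ *ᵥ (P *ᵥ h)) := dp_swap _ _ _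
      _ = 0 := by rw [hCtu, dotProduct_zero]
  exact dotProduct_self_eq_zero.mp hfin
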